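/- Let μ, σ, λ ∈ ℂ, let w ∈ ℂ with w² = λ such that 1−2iw is not a nonpositive integer, and set a = −(σ−μ)/4 + iw, b = −(σ−μ)/4 − iw, c = μ/2. Define η₂(x) = sinh(x/2)^{(μ−1)/2}·cosh(x/2)^{−(σ−1)/2}·sinh(x/2)^{−2b}·₂F₁(b, b−c+1; b−a+1; −sinh(x/2)⁻²) for x > 2·arsinh(1). Then lim_{x→∞} e^{−iwx}·η₂(x) = 2^{−2iw}. -/

import Mathlib

noncomputable section

/-- The Gauss hypergeometric series `₂F₁(a,b;c;z) = Σ_k (a)_k (b)_k / (k! (c)_k) z^k`. -/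
def hyp (a b c z : ℂ) : ℂ :=
  ∑' k : ℕ, (ascPochhammer ℂ k).eval a * (ascPochhammer ℂ k).eval b /
      ((k.factorial : ℂ) * (ascPochhammer ℂ k).eval c) * z ^ k

/-- `η₂(x) = sinh(x/2)^{(μ−1)/2} cosh(x/2)^{−(σ−1)/2} sinh(x/2)^{−2b}
  ₂F₁(b,b−c+1;b−a+1;−sinh(x/2)⁻²)`. -/
def eta2 (a b c μ σ : ℂ) (x : ℝ) : ℂ :=
  ((Real.sinh (x / 2) : ℝ) : ℂ) ^ ((μ - 1) / 2) *
    ((Real.cosh (x / 2) : ℝ) : ℂ) ^ (-((σ - 1) / 2)) *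
    ((Real.sinh (x / 2) : ℝ) : ℂ) ^ (-(2 * b)) *
    hyp b (b - c + 1) (b - a + 1) (-(((Real.sinh (x / 2))⁻¹ ^ 2 : ℝ) : ℂ))

namespace Stmt19Aux

open Filter Polynomial

def coef (b b' c' : ℂ) (k : ℕ) : ℂ :=
  (ascPochhammer ℂ k).eval b * (ascPochhammer ℂ k).eval b' /
    ((k.factorial : ℂ) * (ascPochhammer ℂ k).eval c')

lemma poch_succ (x : ℂ) (k : ℕ) :
    (ascPochhammer ℂ (k + 1)).eval x = (ascPochhammer ℂ k).eval x * (x + k) := by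
  simp [ascPochhammer_succ_right]

lemma poch_ne {c' : ℂ} (hc : ∀ k : ℕ, c' + (k : ℂ) ≠ 0) (k : ℕ) :
    (ascPochhammer ℂ k).eval c' ≠ 0 := by
  induction k with
  | zero => simp
  | succ n ih => rw [poch_succ]; exact mul_ne_zero ih (hc n)

lemma coef_rec {b b' c' : ℂ} (hc : ∀ k : ℕ, c' + (k : ℂ) ≠ 0) (k : ℕ) :
    coef b b' c' (k + 1) * (((k : ℂ) + 1) * (c' + k)) =
      coef b b' c' k * ((b + k) * (b' + k)) := by
  have h1 : ((k.factorial : ℂ)) ≠ 0 := by exact_mod_cast k.factorial_ne_zero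
  have h2 := poch_ne hc k
  have h3 := hc k
  have h4 : ((k : ℂ) + 1) ≠ 0 := Nat.cast_add_one_ne_zero k
  simp only [coef, poch_succ, Nat.factorial_succ, Nat.cast_mul, Nat.cast_add, Nat.cast_one]
  field_simp

lemma coef_bound {b b' c' : ℂ} (hc : ∀ k : ℕ, c' + (k : ℂ) ≠ 0) :
    ∃ M : ℝ, 0 ≤ M ∧ ∀ k, ‖coef b b' c' k‖ ≤ M * 8 ^ k := by
  set N : ℕ := ⌈‖b‖ + ‖b'‖ + 2 * ‖c'‖⌉₊ + 1 with hN
  have hstep : ∀ k, N ≤ k → ‖coef b b' c' (k + 1)‖ ≤ 8 * ‖coef b b' c' k‖ := by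
    intro k hk
    have hkb : ‖b‖ ≤ (k : ℝ) := by
      have h1 : ‖b‖ ≤ ⌈‖b‖ + ‖b'‖ + 2 * ‖c'‖⌉₊ := by
        refine le_trans (by nlinarith [norm_nonneg b', norm_nonneg c'] : ‖b‖ ≤ ‖b‖ + ‖b'‖ + 2 * ‖c'‖) (Nat.le_ceil _)
      exact le_trans h1 (by exact_mod_cast Nat.le_of_succ_le hk)
    have hkb' : ‖b'‖ ≤ (k : ℝ) := by
      have h1 : ‖b'‖ ≤ ⌈‖b‖ + ‖b'‖ + 2 * ‖c'‖⌉₊ := by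
        refine le_trans (by nlinarith [norm_nonneg b, norm_nonneg c'] : ‖b'‖ ≤ ‖b‖ + ‖b'‖ + 2 * ‖c'‖) (Nat.le_ceil _)
      exact le_trans h1 (by exact_mod_cast Nat.le_of_succ_le hk)
    have hkc : 2 * ‖c'‖ ≤ (k : ℝ) := by
      have h1 : 2 * ‖c'‖ ≤ ⌈‖b‖ + ‖b'‖ + 2 * ‖c'‖⌉₊ := by
        refine le_trans (by nlinarith [norm_nonneg b, norm_nonneg b'] : 2 * ‖c'‖ ≤ ‖b‖ + ‖b'‖ + 2 * ‖c'‖) (Nat.le_ceil _)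
      exact le_trans h1 (by exact_mod_cast Nat.le_of_succ_le hk)
    have hk1 : (1 : ℝ) ≤ (k : ℝ) := by
      have : 1 ≤ k := le_trans (Nat.le_add_left 1 _) hk
      exact_mod_cast this
    have hrec := congrArg norm (coef_rec (b := b) (b' := b') hc k)
    rw [norm_mul, norm_mul, norm_mul, norm_mul] at hrec
    have e1 : ‖((k : ℂ) + 1)‖ = (k : ℝ) + 1 := by
      rw [show ((k : ℂ) + 1) = ((k + 1 : ℕ) : ℂ) by push_cast; ring,
        Complex.norm_natCast]
      push_cast; ring
    have e2 : (k : ℝ) - ‖c'‖ ≤ ‖c' + (k : ℂ)‖ := by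
      have := norm_sub_norm_le ((k : ℂ)) (-c')
      simp only [sub_neg_eq_add, norm_neg] at this
      calc (k : ℝ) - ‖c'‖ ≤ ‖(k : ℂ)‖ - ‖c'‖ := by
            simp [Complex.norm_natCast]
        _ ≤ ‖(k : ℂ) + c'‖ := by simpa [sub_eq_add_neg] using this
        _ = ‖c' + (k : ℂ)‖ := by rw [add_comm]
    have e3 : ‖b + (k : ℂ)‖ ≤ 2 * (k : ℝ) := by
      calc ‖b + (k : ℂ)‖ ≤ ‖b‖ + ‖(k : ℂ)‖ := norm_add_le _ _
        _ ≤ (k : ℝ) + (k : ℝ) := by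
            have hnk : ‖((k : ℕ) : ℂ)‖ = (k : ℝ) := Complex.norm_natCast k
            linarith
        _ = 2 * (k : ℝ) := by ring
    have e4 : ‖b' + (k : ℂ)‖ ≤ 2 * (k : ℝ) := by
      calc ‖b' + (k : ℂ)‖ ≤ ‖b'‖ + ‖(k : ℂ)‖ := norm_add_le _ _
        _ ≤ (k : ℝ) + (k : ℝ) := by
            have hnk : ‖((k : ℕ) : ℂ)‖ = (k : ℝ) := Complex.norm_natCast k
            linarith
        _ = 2 * (k : ℝ) := by ring
    have hden : (k : ℝ) * ((k : ℝ) / 2) ≤ ‖((k : ℂ) + 1)‖ * ‖c' + (k : ℂ)‖ := by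
      rw [e1]
      have h5 : (k : ℝ) / 2 ≤ ‖c' + (k : ℂ)‖ := le_trans (by linarith) e2
      have : (0 : ℝ) ≤ (k : ℝ) / 2 := by linarith
      nlinarith [norm_nonneg (c' + (k : ℂ))]
    have hnum : ‖b + (k : ℂ)‖ * ‖b' + (k : ℂ)‖ ≤ 4 * (k : ℝ) ^ 2 := by
      nlinarith [norm_nonneg (b + (k : ℂ)), norm_nonneg (b' + (k : ℂ))]
    have hA := norm_nonneg (coef b b' c' (k + 1))
    have hC := norm_nonneg (coef b b' c' k)
    have key : ‖coef b b' c' (k + 1)‖ * ((k : ℝ) * ((k : ℝ) / 2)) ≤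
        8 * ‖coef b b' c' k‖ * ((k : ℝ) * ((k : ℝ) / 2)) := by
      nlinarith [hrec, mul_le_mul_of_nonneg_left hden hA,
        mul_le_mul_of_nonneg_left hnum hC]
    exact le_of_mul_le_mul_right key (by nlinarith)
  set M : ℝ := ∑ j ∈ Finset.range (N + 1), ‖coef b b' c' j‖ with hM
  have hM0 : 0 ≤ M := Finset.sum_nonneg fun j _ => norm_nonneg _
  have hle : ∀ j, j ≤ N → ‖coef b b' c' j‖ ≤ M := by
    intro j hj
    exact Finset.single_le_sum (fun i _ => norm_nonneg _) (Finset.mem_range.mpr (by omega))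
  refine ⟨M, hM0, ?_⟩
  have haux : ∀ k, N ≤ k → ‖coef b b' c' k‖ ≤ M * 8 ^ k := by
    intro k hk
    induction k, hk using Nat.le_induction with
    | base =>
      calc ‖coef b b' c' N‖ ≤ M := hle N le_rfl
        _ ≤ M * 8 ^ N := le_mul_of_one_le_right hM0 (one_le_pow₀ (by norm_num))
    | succ n hn ih =>
      calc ‖coef b b' c' (n + 1)‖ ≤ 8 * ‖coef b b' c' n‖ := hstep n hn
        _ ≤ 8 * (M * 8 ^ n) := by linarith
        _ = M * 8 ^ (n + 1) := by ring
  intro k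
  rcases le_or_gt k N with h | h
  · calc ‖coef b b' c' k‖ ≤ M := hle k h
      _ ≤ M * 8 ^ k := le_mul_of_one_le_right hM0 (one_le_pow₀ (by norm_num))
  · exact haux k h.le

lemma hyp_sub_one_bound {b b' c' : ℂ} {M : ℝ} (hM : 0 ≤ M)
    (hMb : ∀ k, ‖coef b b' c' k‖ ≤ M * 8 ^ k)
    {z : ℂ} (hz : ‖z‖ ≤ 1 / 16) :
    ‖hyp b b' c' z - 1‖ ≤ 16 * M * ‖z‖ := by
  have hzn : (0 : ℝ) ≤ ‖z‖ := norm_nonneg z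
  have hbd : ∀ k : ℕ, ‖coef b b' c' k * z ^ k‖ ≤ M * (1 / 2) ^ k := by
    intro k
    rw [norm_mul, norm_pow]
    calc ‖coef b b' c' k‖ * ‖z‖ ^ k ≤ (M * 8 ^ k) * ‖z‖ ^ k :=
        mul_le_mul_of_nonneg_right (hMb k) (by positivity)
      _ = M * (8 * ‖z‖) ^ k := by rw [mul_pow]; ring
      _ ≤ M * (1 / 2) ^ k := by
          exact mul_le_mul_of_nonneg_left
            (pow_le_pow_left₀ (by positivity) (by linarith) k) hM
  have hsum : Summable (fun k : ℕ => coef b b' c' k * z ^ k) :=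
    Summable.of_norm_bounded (summable_geometric_two.mul_left M) hbd
  have h0 : coef b b' c' 0 * z ^ 0 = 1 := by simp [coef]
  have heq : hyp b b' c' z = 1 + ∑' k : ℕ, coef b b' c' (k + 1) * z ^ (k + 1) := by
    have h1 : hyp b b' c' z = ∑' k : ℕ, coef b b' c' k * z ^ k := rfl
    rw [h1, hsum.tsum_eq_zero_add, h0]
  rw [heq, add_sub_cancel_left]
  have hbd2 : ∀ k : ℕ, ‖coef b b' c' (k + 1) * z ^ (k + 1)‖ ≤
      (8 * M * ‖z‖) * (1 / 2) ^ k := by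
    intro k
    rw [norm_mul, norm_pow]
    calc ‖coef b b' c' (k + 1)‖ * ‖z‖ ^ (k + 1)
        ≤ (M * 8 ^ (k + 1)) * ‖z‖ ^ (k + 1) :=
          mul_le_mul_of_nonneg_right (hMb (k + 1)) (by positivity)
      _ = (8 * M * ‖z‖) * (8 * ‖z‖) ^ k := by rw [mul_pow, pow_succ, pow_succ]; ring
      _ ≤ (8 * M * ‖z‖) * (1 / 2) ^ k := by
          exact mul_le_mul_of_nonneg_left
            (pow_le_pow_left₀ (by positivity) (by linarith) k) (by positivity)
  calc ‖∑' k : ℕ, coef b b' c' (k + 1) * z ^ (k + 1)‖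
      ≤ (8 * M * ‖z‖) * 2 := tsum_of_norm_bounded (hasSum_geometric_two.mul_left _) hbd2
    _ = 16 * M * ‖z‖ := by ring

lemma hyp_tendsto {α : Type*} {b b' c' : ℂ} (hc : ∀ k : ℕ, c' + (k : ℂ) ≠ 0)
    {l : Filter α} {z : α → ℂ} (hz : Filter.Tendsto z l (nhds 0)) :
    Filter.Tendsto (fun t => hyp b b' c' (z t)) l (nhds 1) := by
  obtain ⟨M, hM, hMb⟩ := coef_bound (b := b) (b' := b') hc
  rw [tendsto_iff_norm_sub_tendsto_zero]
  have hzn : Filter.Tendsto (fun t => ‖z t‖) l (nhds 0) := by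
    simpa using hz.norm
  refine squeeze_zero' (g := fun t => 16 * M * ‖z t‖)
    (Filter.Eventually.of_forall fun t => norm_nonneg _) ?_ ?_
  · filter_upwards [hzn.eventually_le_const (by norm_num : (0 : ℝ) < 1 / 16)] with t ht
    exact hyp_sub_one_bound hM hMb ht
  · simpa using hzn.const_mul (16 * M)

lemma log_sinh_tendsto :
    Filter.Tendsto (fun x : ℝ => Real.log (Real.sinh (x / 2)) - x / 2)
      Filter.atTop (nhds (-Real.log 2)) := by
  have h1 : Filter.Tendsto (fun x : ℝ => (1 - Real.exp (-x)) / 2)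
      Filter.atTop (nhds ((1 : ℝ) / 2)) := by
    have h := ((tendsto_const_nhds (x := (1 : ℝ)) (f := Filter.atTop)).sub
      Real.tendsto_exp_neg_atTop_nhds_zero).div_const 2
    simpa using h
  have h2 : Filter.Tendsto (fun x : ℝ => Real.log ((1 - Real.exp (-x)) / 2))
      Filter.atTop (nhds (Real.log (1 / 2))) :=
    ((Real.continuousAt_log (by norm_num)).tendsto).comp h1
  rw [show Real.log ((1 : ℝ) / 2) = -Real.log 2 by rw [one_div, Real.log_inv]] at h2
  refine h2.congr' ?_
  filter_upwards [eventually_gt_atTop (0 : ℝ)] with x hx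
  have hex : Real.exp (-x) < 1 := Real.exp_lt_one_iff.mpr (by linarith)
  have ha : (0 : ℝ) < (1 - Real.exp (-x)) / 2 := by linarith
  have h1 : Real.exp (-x) * Real.exp (x / 2) = Real.exp (-(x / 2)) := by
    rw [← Real.exp_add]; ring_nf
  have key : Real.sinh (x / 2) = (1 - Real.exp (-x)) / 2 * Real.exp (x / 2) := by
    rw [Real.sinh_eq]
    linear_combination (1 / 2 : ℝ) * h1
  rw [key, Real.log_mul ha.ne' (Real.exp_pos _).ne', Real.log_exp]
  ring

lemma log_cosh_tendsto :
    Filter.Tendsto (fun x : ℝ => Real.log (Real.cosh (x / 2)) - x / 2)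
      Filter.atTop (nhds (-Real.log 2)) := by
  have h1 : Filter.Tendsto (fun x : ℝ => (1 + Real.exp (-x)) / 2)
      Filter.atTop (nhds ((1 : ℝ) / 2)) := by
    have h := ((tendsto_const_nhds (x := (1 : ℝ)) (f := Filter.atTop)).add
      Real.tendsto_exp_neg_atTop_nhds_zero).div_const 2
    simpa using h
  have h2 : Filter.Tendsto (fun x : ℝ => Real.log ((1 + Real.exp (-x)) / 2))
      Filter.atTop (nhds (Real.log (1 / 2))) :=
    ((Real.continuousAt_log (by norm_num)).tendsto).comp h1
  rw [show Real.log ((1 : ℝ) / 2) = -Real.log 2 by rw [one_div, Real.log_inv]] at h2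
  refine h2.congr' ?_
  filter_upwards [eventually_gt_atTop (0 : ℝ)] with x hx
  have hex : (0 : ℝ) < Real.exp (-x) := Real.exp_pos _
  have ha : (0 : ℝ) < (1 + Real.exp (-x)) / 2 := by linarith
  have h1 : Real.exp (-x) * Real.exp (x / 2) = Real.exp (-(x / 2)) := by
    rw [← Real.exp_add]; ring_nf
  have key : Real.cosh (x / 2) = (1 + Real.exp (-x)) / 2 * Real.exp (x / 2) := by
    rw [Real.cosh_eq]
    linear_combination (-(1 / 2) : ℝ) * h1
  rw [key, Real.log_mul ha.ne' (Real.exp_pos _).ne', Real.log_exp]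
  ring

lemma sinh_half_atTop :
    Filter.Tendsto (fun x : ℝ => Real.sinh (x / 2)) Filter.atTop Filter.atTop := by
  have hs : Filter.Tendsto Real.sinh Filter.atTop Filter.atTop := by
    have h : Filter.Tendsto (fun x : ℝ => (Real.exp x - Real.exp (-x)) / 2)
        Filter.atTop Filter.atTop := by
      apply Filter.Tendsto.atTop_div_const (by norm_num)
      exact Real.tendsto_exp_atTop.atTop_add Real.tendsto_exp_neg_atTop_nhds_zero.neg
    exact h.congr fun x => (Real.sinh_eq x).symm
  exact hs.comp (Filter.tendsto_id.atTop_div_const (by norm_num))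

end Stmt19Aux

open Stmt19Aux Filter
/-- `e^{−iwx} η₂(x) → 2^{−2iw}` as `x → ∞`. -/
theorem stmt19 (μ σ lam : ℂ) (w : ℂ) (hw : w ^ 2 = lam)
    (hns : ∀ k : ℕ, (1 : ℂ) - 2 * Complex.I * w ≠ -(k : ℂ))
    (a b c : ℂ) (ha : a = -(σ - μ) / 4 + Complex.I * w)
    (hb : b = -(σ - μ) / 4 - Complex.I * w) (hc' : c = μ / 2) :
    Filter.Tendsto (fun x : ℝ => Complex.exp (-(Complex.I * w) * (x : ℂ)) * eta2 a b c μ σ x)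
      Filter.atTop (nhds ((2 : ℂ) ^ (-(2 * Complex.I * w)))) := by
  have hcne : ∀ k : ℕ, (b - a + 1) + (k : ℂ) ≠ 0 := by
    intro k hk0
    apply hns k
    have hcc : b - a + 1 = 1 - 2 * Complex.I * w := by rw [ha, hb]; ring
    rw [← hcc]
    exact eq_neg_of_add_eq_zero_left hk0
  -- the argument of the hypergeometric series tends to 0
  have hz0 : Filter.Tendsto (fun x : ℝ => -(((Real.sinh (x / 2))⁻¹ ^ 2 : ℝ) : ℂ))
      Filter.atTop (nhds 0) := by
    have h1 : Filter.Tendsto (fun x : ℝ => (Real.sinh (x / 2))⁻¹) Filter.atTop (nhds 0) :=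
      tendsto_inv_atTop_zero.comp sinh_half_atTop
    have h2 : Filter.Tendsto (fun x : ℝ => (Real.sinh (x / 2))⁻¹ ^ 2)
        Filter.atTop (nhds 0) := by
      simpa using h1.pow 2
    have h3 := (Complex.continuous_ofReal.tendsto 0).comp h2
    simpa using h3.neg
  have hF : Filter.Tendsto
      (fun x : ℝ => hyp b (b - c + 1) (b - a + 1) (-(((Real.sinh (x / 2))⁻¹ ^ 2 : ℝ) : ℂ)))
      Filter.atTop (nhds 1) := hyp_tendsto hcne hz0
  -- the exponential factor
  set p : ℂ := (μ - 1) / 2 - 2 * b with hp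
  set q : ℂ := -((σ - 1) / 2) with hq
  have hgs : Filter.Tendsto
      (fun x : ℝ => p * ((Real.log (Real.sinh (x / 2)) : ℂ) - (x : ℂ) / 2))
      Filter.atTop (nhds (p * (-(Real.log 2 : ℂ)))) := by
    have h2 : Filter.Tendsto
        (fun x : ℝ => ((Real.log (Real.sinh (x / 2)) : ℂ) - (x : ℂ) / 2))
        Filter.atTop (nhds (-(Real.log 2 : ℂ))) := by
      have h := (Complex.continuous_ofReal.tendsto (-Real.log 2)).comp log_sinh_tendsto
      have hv : ((-Real.log 2 : ℝ) : ℂ) = -(Real.log 2 : ℂ) := by push_cast; ring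
      rw [← hv]
      exact h.congr fun x => by simp only [Function.comp_apply]; push_cast; ring
    exact h2.const_mul p
  have hgc : Filter.Tendsto
      (fun x : ℝ => q * ((Real.log (Real.cosh (x / 2)) : ℂ) - (x : ℂ) / 2))
      Filter.atTop (nhds (q * (-(Real.log 2 : ℂ)))) := by
    have h2 : Filter.Tendsto
        (fun x : ℝ => ((Real.log (Real.cosh (x / 2)) : ℂ) - (x : ℂ) / 2))
        Filter.atTop (nhds (-(Real.log 2 : ℂ))) := by
      have h := (Complex.continuous_ofReal.tendsto (-Real.log 2)).comp log_cosh_tendsto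
      have hv : ((-Real.log 2 : ℝ) : ℂ) = -(Real.log 2 : ℂ) := by push_cast; ring
      rw [← hv]
      exact h.congr fun x => by simp only [Function.comp_apply]; push_cast; ring
    exact h2.const_mul q
  have hg := hgs.add hgc
  have hexp := (Complex.continuous_exp.tendsto _).comp hg
  have htot := hexp.mul hF
  rw [mul_one] at htot
  -- identify the limit value
  have hlog2 : Complex.log 2 = ((Real.log 2 : ℝ) : ℂ) := by
    rw [show (2 : ℂ) = ((2 : ℝ) : ℂ) by norm_num, ← Complex.ofReal_log (by norm_num : (0 : ℝ) ≤ 2)]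
  have hval : (2 : ℂ) ^ (-(2 * Complex.I * w)) =
      Complex.exp (p * (-(Real.log 2 : ℂ)) + q * (-(Real.log 2 : ℂ))) := by
    rw [Complex.cpow_def_of_ne_zero two_ne_zero, hlog2]
    congr 1
    rw [hp, hq, hb]
    ring
  rw [hval]
  refine htot.congr' ?_
  filter_upwards [eventually_ge_atTop (1 : ℝ)] with x hx
  have hx2 : (0 : ℝ) < x / 2 := by linarith
  have hs : (0 : ℝ) < Real.sinh (x / 2) := Real.sinh_pos_iff.mpr hx2
  have hch : (0 : ℝ) < Real.cosh (x / 2) := Real.cosh_pos _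
  have hsne : ((Real.sinh (x / 2) : ℝ) : ℂ) ≠ 0 := Complex.ofReal_ne_zero.mpr hs.ne'
  have hcne2 : ((Real.cosh (x / 2) : ℝ) : ℂ) ≠ 0 := Complex.ofReal_ne_zero.mpr hch.ne'
  show Complex.exp (p * ((Real.log (Real.sinh (x / 2)) : ℂ) - (x : ℂ) / 2) +
      q * ((Real.log (Real.cosh (x / 2)) : ℂ) - (x : ℂ) / 2)) *
      hyp b (b - c + 1) (b - a + 1) (-(((Real.sinh (x / 2))⁻¹ ^ 2 : ℝ) : ℂ)) = _
  rw [eta2, Complex.cpow_def_of_ne_zero hsne, Complex.cpow_def_of_ne_zero hcne2,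
    Complex.cpow_def_of_ne_zero hsne, ← Complex.ofReal_log hs.le, ← Complex.ofReal_log hch.le,
    ← Complex.exp_add, ← Complex.exp_add, ← mul_assoc, ← Complex.exp_add]
  congr 1
  rw [hp, hq, hb]
  ring
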